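/- Let L₁ and L₂ be two distinct rooted trees each with ℓ vertices. Then for every n, the number of rooted trees on n vertices that do not contain L₁ as a limb equals the number of rooted trees on n vertices that do not contain L₂ as a limb. -/

import Mathlib

/-- A rooted tree: a root together with a list of rooted subtrees
(the list order is quotiented out by `Iso` below). -/
inductive RTree : Type
  | node : List RTree → RTree

mutual
  /-- The number of vertices of a rooted tree. -/
  def RTree.size : RTree → ℕ
    | .node c => 1 + RTree.sizeList c
  def RTree.sizeList : List RTree → ℕ
    | [] => 0
    | t :: ts => RTree.size t + RTree.sizeList ts
end

mutual
  /-- Isomorphism of rooted trees: the children correspond up to isomorphism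
  and permutation. -/
  inductive RTree.Iso : RTree → RTree → Prop
    | node (c c' l : List RTree) :
        l.Perm c' → RTree.IsoList c l → RTree.Iso (.node c) (.node c')
  inductive RTree.IsoList : List RTree → List RTree → Prop
    | nil : RTree.IsoList [] []
    | cons {t t' : RTree} {ts ts' : List RTree} :
        RTree.Iso t t' → RTree.IsoList ts ts' → RTree.IsoList (t :: ts) (t' :: ts')
end

/-- `HasLimb T L` says that the rooted tree `T` contains `L` as a limb: some vertex
`v` of `T` together with a collection of branches at `v` (i.e. `v` together with
the full subtrees of a submultiset of the children of `v`) is isomorphic to `L`. -/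
inductive HasLimb : RTree → RTree → Prop
  | here (c sub : List RTree) (L : RTree) :
      sub.Subperm c → RTree.Iso (.node sub) L → HasLimb (.node c) L
  | child (c : List RTree) (t L : RTree) :
      t ∈ c → HasLimb t L → HasLimb (.node c) L

namespace LimbAux

open Multiset

lemma size_node (c : List RTree) : (RTree.node c).size = 1 + RTree.sizeList c := by
  rw [RTree.size]

lemma sizeList_eq (l : List RTree) : RTree.sizeList l = (l.map RTree.size).sum := by
  induction l with
  | nil => rw [RTree.sizeList]; simp
  | cons t ts ih => rw [RTree.sizeList]; simp [ih]

lemma one_le_size (t : RTree) : 1 ≤ t.size := by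
  cases t with | node c => rw [size_node]; omega

lemma size_le_sizeList {t : RTree} : ∀ {c : List RTree}, t ∈ c →
    t.size ≤ RTree.sizeList c := by
  intro c
  induction c with
  | nil => intro h; simp at h
  | cons x xs ih =>
    intro h
    rw [RTree.sizeList]
    rcases List.mem_cons.mp h with h | h
    · subst h; omega
    · have := ih h; omega

lemma size_lt_of_mem {t : RTree} {c : List RTree} (h : t ∈ c) :
    t.size < (RTree.node c).size := by
  have := size_le_sizeList h; rw [size_node]; omega

/-- Strong induction principle. -/
theorem node_ind (P : RTree → Prop)
    (h : ∀ c : List RTree, (∀ t ∈ c, P t) → P (.node c)) : ∀ t, P t := by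
  have key : ∀ n t, RTree.size t ≤ n → P t := by
    intro n
    induction n with
    | zero => intro t ht; have := one_le_size t; omega
    | succ n ih =>
      intro t ht
      cases t with
      | node c =>
        refine h c fun x hx => ih x ?_
        have := size_lt_of_mem hx
        omega
  exact fun t => key t.size t le_rfl

lemma isoList_iff {l l' : List RTree} :
    RTree.IsoList l l' ↔ List.Forall₂ RTree.Iso l l' := by
  constructor
  · intro h
    induction l generalizing l' with
    | nil => cases h; exact List.Forall₂.nil
    | cons a as ih =>
      cases h with
      | cons h1 h2 => exact List.Forall₂.cons h1 (ih h2)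
  · intro h
    induction h with
    | nil => exact RTree.IsoList.nil
    | cons h1 _ ih => exact RTree.IsoList.cons h1 ih

lemma rel_coe {r : RTree → RTree → Prop} {c c' : List RTree} :
    Multiset.Rel r (↑c) (↑c') ↔ ∃ l : List RTree, l.Perm c' ∧ List.Forall₂ r c l := by
  constructor
  · intro h
    induction c generalizing c' with
    | nil =>
      have h0 : (↑c' : Multiset RTree) = 0 := by simpa using h
      rw [Multiset.coe_eq_zero] at h0
      subst h0
      exact ⟨[], List.Perm.nil, List.Forall₂.nil⟩
    | cons a as ih =>
      rw [← Multiset.cons_coe] at h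
      obtain ⟨b, bs', hab, hrel, hcc⟩ := rel_cons_left.mp h
      obtain ⟨lb, rfl⟩ := bs'.exists_rep
      simp only [Multiset.quot_mk_to_coe, Multiset.quot_mk_to_coe', Multiset.quot_mk_to_coe'']
        at hrel hcc
      rw [Multiset.cons_coe, Multiset.coe_eq_coe] at hcc
      obtain ⟨l, hperm, hf⟩ := ih (c' := lb) hrel
      exact ⟨b :: l, ((hperm.cons b)).trans hcc.symm, List.Forall₂.cons hab hf⟩
  · rintro ⟨l, hperm, hf⟩
    have key : ∀ {c l : List RTree}, List.Forall₂ r c l → Multiset.Rel r (↑c) (↑l) := by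
      intro c l hf
      induction hf with
      | nil => simp
      | cons h1 _ ih =>
        rw [← Multiset.cons_coe, ← Multiset.cons_coe]
        exact Multiset.Rel.cons h1 ih
    have h1 := key hf
    rwa [Multiset.coe_eq_coe.mpr hperm] at h1

lemma iso_node_iff {c c' : List RTree} :
    RTree.Iso (.node c) (.node c') ↔ Multiset.Rel RTree.Iso (↑c) (↑c') := by
  rw [rel_coe]
  constructor
  · rintro ⟨_, _, l, hperm, hlist⟩
    exact ⟨l, hperm, isoList_iff.mp hlist⟩
  · rintro ⟨l, hperm, hf⟩
    exact RTree.Iso.node c c' l hperm (isoList_iff.mpr hf)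

end LimbAux

namespace LimbAux

open Multiset

lemma iso_refl : ∀ t, RTree.Iso t t := by
  apply node_ind
  intro c ih
  rw [iso_node_iff]
  exact rel_refl_of_refl_on fun x hx => ih x (Multiset.mem_coe.mp hx)

lemma iso_symm : ∀ {t t' : RTree}, RTree.Iso t t' → RTree.Iso t' t := by
  have key : ∀ n t t', RTree.size t ≤ n → RTree.Iso t t' → RTree.Iso t' t := by
    intro n
    induction n with
    | zero => intro t t' ht _; have := one_le_size t; omega
    | succ n ih =>
      intro t t' ht h
      cases t with | node c =>
      cases t' with | node c' =>
      rw [iso_node_iff] at h ⊢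
      rw [← rel_flip]
      refine h.mono fun a ha b _ hab => ?_
      have ha' : a ∈ c := Multiset.mem_coe.mp ha
      have := size_lt_of_mem ha'
      exact ih a b (by omega) hab
  exact fun {t t'} h => key t.size t t' le_rfl h

lemma rel_trans_of (r : RTree → RTree → Prop) :
    ∀ (s t u : Multiset RTree), (∀ x ∈ s, ∀ y z, r x y → r y z → r x z) →
      Multiset.Rel r s t → Multiset.Rel r t u → Multiset.Rel r s u := by
  intro s
  induction s using Multiset.induction_on with
  | empty =>
    intro t u _ h1 h2
    rw [rel_zero_left] at h1
    subst h1
    rw [rel_zero_left] at h2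
    subst h2
    simp
  | cons x s ih =>
    intro t u hx h1 h2
    obtain ⟨y, t', hxy, h1', rfl⟩ := rel_cons_left.mp h1
    obtain ⟨z, u', hyz, h2', rfl⟩ := rel_cons_left.mp h2
    exact Multiset.Rel.cons (hx x (Multiset.mem_cons_self _ _) y z hxy hyz)
      (ih t' u' (fun a ha => hx a (Multiset.mem_cons_of_mem ha)) h1' h2')

lemma iso_trans : ∀ {a b c : RTree}, RTree.Iso a b → RTree.Iso b c → RTree.Iso a c := by
  have key : ∀ n a b c, RTree.size a ≤ n →
      RTree.Iso a b → RTree.Iso b c → RTree.Iso a c := by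
    intro n
    induction n with
    | zero => intro a _ _ ha _ _; have := one_le_size a; omega
    | succ n ih =>
      intro a b c ha h1 h2
      cases a with | node ca =>
      cases b with | node cb =>
      cases c with | node cc =>
      rw [iso_node_iff] at h1 h2 ⊢
      refine rel_trans_of _ _ _ _ ?_ h1 h2
      intro x hx y z hxy hyz
      have hx' : x ∈ ca := Multiset.mem_coe.mp hx
      have := size_lt_of_mem hx'
      exact ih x y z (by omega) hxy hyz
  exact fun {a b c} h1 h2 => key a.size a b c le_rfl h1 h2

lemma iso_size : ∀ {t t' : RTree}, RTree.Iso t t' → t.size = t'.size := by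
  have key : ∀ n t t', RTree.size t ≤ n → RTree.Iso t t' → t.size = t'.size := by
    intro n
    induction n with
    | zero => intro t _ ht _; have := one_le_size t; omega
    | succ n ih =>
      intro t t' ht h
      cases t with | node c =>
      cases t' with | node c' =>
      rw [iso_node_iff] at h
      have hmap : (↑c : Multiset RTree).map RTree.size = (↑c' : Multiset RTree).map RTree.size := by
        rw [← rel_eq]
        rw [rel_map]
        refine h.mono fun a ha b _ hab => ?_
        have ha' : a ∈ c := Multiset.mem_coe.mp ha
        have := size_lt_of_mem ha'
        exact ih a b (by omega) hab
      rw [size_node, size_node, sizeList_eq, sizeList_eq]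
      have : ((c.map RTree.size : List ℕ) : Multiset ℕ).sum
          = ((c'.map RTree.size : List ℕ) : Multiset ℕ).sum := by
        rw [← Multiset.map_coe, ← Multiset.map_coe, hmap]
      simpa using this
  exact fun {t t'} h => key t.size t t' le_rfl h

lemma sizeList_mono {s t : List RTree} (h : (↑s : Multiset RTree) ≤ ↑t) :
    RTree.sizeList s ≤ RTree.sizeList t := by
  rw [sizeList_eq, sizeList_eq]
  obtain ⟨u, hu⟩ := Multiset.le_iff_exists_add.mp (Multiset.map_le_map (f := RTree.size) h)
  have : ((t.map RTree.size : List ℕ) : Multiset ℕ).sum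
      = ((s.map RTree.size : List ℕ) : Multiset ℕ).sum + u.sum := by
    rw [← Multiset.sum_add, ← Multiset.map_coe, ← Multiset.map_coe, ← hu]
  simp only [Multiset.sum_coe] at this
  omega

lemma hasLimb_size {T L : RTree} (h : HasLimb T L) : L.size ≤ T.size := by
  induction h with
  | here c sub L hsub hiso =>
    rw [← iso_size hiso, size_node, size_node]
    have := sizeList_mono (Multiset.coe_le.mpr hsub)
    omega
  | child c t L ht _ ih =>
    have := size_lt_of_mem ht
    omega

lemma rel_sub {r : RTree → RTree → Prop} :
    ∀ (u s t : Multiset RTree), Multiset.Rel r s t → u ≤ s →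
      ∃ v, v ≤ t ∧ Multiset.Rel r u v := by
  intro u
  induction u using Multiset.induction_on with
  | empty => intro s t _ _; exact ⟨0, Multiset.zero_le _, by simp⟩
  | cons x u ih =>
    intro s t hrel hle
    have hx : x ∈ s := Multiset.mem_of_le hle (Multiset.mem_cons_self _ _)
    obtain ⟨s', rfl⟩ := Multiset.exists_cons_of_mem hx
    have hu : u ≤ s' := (Multiset.cons_le_cons_iff x).mp hle
    obtain ⟨y, t', hxy, hrel', rfl⟩ := rel_cons_left.mp hrel
    obtain ⟨v, hv, hrelv⟩ := ih s' t' hrel' hu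
    exact ⟨y ::ₘ v, Multiset.cons_le_cons y hv, Multiset.Rel.cons hxy hrelv⟩

lemma hasLimb_congr : ∀ {T T' L : RTree}, RTree.Iso T T' → HasLimb T L → HasLimb T' L := by
  have key : ∀ n T T' L, RTree.size T ≤ n → RTree.Iso T T' → HasLimb T L → HasLimb T' L := by
    intro n
    induction n with
    | zero => intro T _ _ hT _ _; have := one_le_size T; omega
    | succ n ih =>
      intro T T' L hT hiso hlimb
      cases T with | node c =>
      cases T' with | node c' =>
      rw [iso_node_iff] at hiso
      cases hlimb with
      | here _ sub _ hsub hsubiso =>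
        obtain ⟨v, hv, hrelv⟩ := rel_sub (↑sub) _ _ hiso (Multiset.coe_le.mpr hsub)
        obtain ⟨lv, rfl⟩ := v.exists_rep
        simp only [Multiset.quot_mk_to_coe, Multiset.quot_mk_to_coe',
          Multiset.quot_mk_to_coe''] at hv hrelv
        have hiso2 : RTree.Iso (.node sub) (.node lv) := iso_node_iff.mpr hrelv
        exact HasLimb.here c' lv L (Multiset.coe_le.mp hv) (iso_trans (iso_symm hiso2) hsubiso)
      | child _ t _ ht hlt =>
        obtain ⟨t', ht', htt'⟩ := exists_mem_of_rel_of_mem hiso (Multiset.mem_coe.mpr ht)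
        have := size_lt_of_mem ht
        exact HasLimb.child c' t' L (Multiset.mem_coe.mp ht')
          (ih t t' L (by omega) htt' hlt)
  exact fun {T T' L} h1 h2 => key T.size T T' L le_rfl h1 h2

lemma hasLimb_congr_right {T L L' : RTree} (h : RTree.Iso L L') (hl : HasLimb T L) :
    HasLimb T L' := by
  induction hl with
  | here c sub _ hsub hiso => exact HasLimb.here c sub L' hsub (iso_trans hiso h)
  | child c t _ ht _ ih => exact HasLimb.child c t L' ht (ih h)

end LimbAux

namespace LimbAux

open Multiset

instance isoSetoid : Setoid RTree :=
  ⟨RTree.Iso, fun t => iso_refl t, fun h => iso_symm h, fun h1 h2 => iso_trans h1 h2⟩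

/-- Rooted trees up to isomorphism. -/
def Q := Quotient isoSetoid

def mkQ (t : RTree) : Q := Quotient.mk isoSetoid t

lemma mkQ_eq {t t' : RTree} : mkQ t = mkQ t' ↔ RTree.Iso t t' :=
  ⟨fun h => Quotient.exact h, fun h => Quotient.sound h⟩

def sizeQ : Q → ℕ := Quotient.lift RTree.size fun _ _ h => iso_size h

@[simp] lemma sizeQ_mk (t : RTree) : sizeQ (mkQ t) = t.size := rfl

def limbQ (L : RTree) : Q → Prop :=
  Quotient.lift (fun t => HasLimb t L) fun _ _ h =>
    propext ⟨hasLimb_congr h, hasLimb_congr (iso_symm h)⟩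

@[simp] lemma limbQ_mk (L t : RTree) : limbQ L (mkQ t) ↔ HasLimb t L := Iff.rfl

private def chlAux : RTree → Multiset Q
  | .node c => ((c.map mkQ : List Q) : Multiset Q)

def chl : Q → Multiset Q :=
  Quotient.lift chlAux (by
    rintro ⟨c⟩ ⟨c'⟩ h
    have h' : Multiset.Rel RTree.Iso (↑c) (↑c') := iso_node_iff.mp h
    show ((c.map mkQ : List Q) : Multiset Q) = ((c'.map mkQ : List Q) : Multiset Q)
    rw [← Multiset.map_coe, ← Multiset.map_coe, ← rel_eq, rel_map]
    exact h'.mono fun a _ b _ hab => mkQ_eq.mpr hab)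

lemma chl_mk (c : List RTree) : chl (mkQ (.node c)) = (↑c : Multiset RTree).map mkQ := by
  show ((c.map mkQ : List Q) : Multiset Q) = _
  rw [← Multiset.map_coe]

lemma chl_injective : Function.Injective chl := by
  intro q q' h
  induction q using Quotient.ind with | _ t =>
  induction q' using Quotient.ind with | _ t' =>
  cases t with | node c =>
  cases t' with | node c' =>
  have h' := h
  rw [show (Quotient.mk isoSetoid (RTree.node c)) = mkQ (.node c) from rfl,
    show (Quotient.mk isoSetoid (RTree.node c')) = mkQ (.node c') from rfl,
    chl_mk, chl_mk, ← rel_eq, rel_map] at h'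
  exact Quotient.sound (iso_node_iff.mpr (h'.mono fun a _ b _ hab => mkQ_eq.mp hab))

lemma map_mkQ_surj (m : Multiset Q) : ∃ s : Multiset RTree, s.map mkQ = m := by
  induction m using Multiset.induction_on with
  | empty => exact ⟨0, rfl⟩
  | cons a m ih =>
    obtain ⟨s, hs⟩ := ih
    obtain ⟨t, ht⟩ := Quotient.exists_rep a
    refine ⟨t ::ₘ s, ?_⟩
    rw [Multiset.map_cons, hs]
    exact congrArg (· ::ₘ m) ht

lemma chl_surjective : Function.Surjective chl := by
  intro m
  obtain ⟨s, hs⟩ := map_mkQ_surj m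
  obtain ⟨l, rfl⟩ := s.exists_rep
  refine ⟨mkQ (.node l), ?_⟩
  rw [chl_mk, ← hs]
  rfl

lemma sizeQ_chl (q : Q) : sizeQ q = 1 + ((chl q).map sizeQ).sum := by
  induction q using Quotient.ind with | _ t =>
  cases t with | node c =>
  show (RTree.node c).size = 1 + ((chl (mkQ (.node c))).map sizeQ).sum
  rw [chl_mk, size_node, sizeList_eq, Multiset.map_map]
  have : ((↑c : Multiset RTree).map (sizeQ ∘ mkQ)) = (↑c : Multiset RTree).map RTree.size := rfl
  rw [this, Multiset.map_coe, Multiset.sum_coe]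

lemma one_le_sizeQ (q : Q) : 1 ≤ sizeQ q := by
  induction q using Quotient.ind with | _ t =>
  exact one_le_size t

lemma exists_le_map {α β : Type*} {f : α → β} :
    ∀ {s : Multiset β} {t : Multiset α}, s ≤ t.map f → ∃ t' ≤ t, t'.map f = s := by
  intro s
  induction s using Multiset.induction_on with
  | empty => intro t _; exact ⟨0, Multiset.zero_le _, rfl⟩
  | cons b s ih =>
    intro t hle
    have hb : b ∈ t.map f := Multiset.mem_of_le hle (Multiset.mem_cons_self _ _)
    obtain ⟨a, ha, rfl⟩ := Multiset.mem_map.mp hb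
    obtain ⟨t₀, rfl⟩ := Multiset.exists_cons_of_mem ha
    rw [Multiset.map_cons] at hle
    have hs : s ≤ t₀.map f := (Multiset.cons_le_cons_iff _).mp hle
    obtain ⟨t', ht', hmap⟩ := ih hs
    exact ⟨a ::ₘ t', Multiset.cons_le_cons a ht', by rw [Multiset.map_cons, hmap]⟩

lemma limbQ_iff (L : RTree) (q : Q) :
    limbQ L q ↔ chl (mkQ L) ≤ chl q ∨ ∃ x ∈ chl q, limbQ L x := by
  induction q using Quotient.ind with | _ t =>
  cases t with | node c =>
  show HasLimb (.node c) L ↔ chl (mkQ L) ≤ chl (mkQ (.node c)) ∨ _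
  cases L with | node cl =>
  rw [chl_mk, chl_mk]
  constructor
  · intro h
    cases h with
    | here _ sub _ hsub hiso =>
      left
      have h1 : (↑sub : Multiset RTree).map mkQ = (↑cl : Multiset RTree).map mkQ := by
        rw [← rel_eq, rel_map]
        exact (iso_node_iff.mp hiso).mono fun a _ b _ hab => mkQ_eq.mpr hab
      rw [← h1]
      exact Multiset.map_le_map (Multiset.coe_le.mpr hsub)
    | child _ t _ ht hl =>
      right
      exact ⟨mkQ t, Multiset.mem_map_of_mem _ (Multiset.mem_coe.mpr ht), hl⟩
  · rintro (h | ⟨x, hx, hl⟩)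
    · obtain ⟨t', ht', hmap⟩ := exists_le_map h
      obtain ⟨lsub, rfl⟩ := t'.exists_rep
      simp only [Multiset.quot_mk_to_coe, Multiset.quot_mk_to_coe',
        Multiset.quot_mk_to_coe''] at ht' hmap
      have hiso : RTree.Iso (.node lsub) (.node cl) := by
        rw [iso_node_iff]
        exact (rel_map.mp (rel_eq.mpr hmap)).mono fun a _ b _ hab => mkQ_eq.mp hab
      exact HasLimb.here c lsub _ (Multiset.coe_le.mp ht') hiso
    · have hx' : x ∈ (↑c : Multiset RTree).map mkQ := by
        rw [← chl_mk]; exact hx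
      obtain ⟨t, ht, rfl⟩ := Multiset.mem_map.mp hx'
      exact HasLimb.child c t _ (Multiset.mem_coe.mp ht) hl

end LimbAux

namespace LimbAux

open Multiset

lemma card_le_msum (m : Multiset Q) : Multiset.card m ≤ (m.map sizeQ).sum := by
  induction m using Multiset.induction_on with
  | empty => simp
  | cons a m ih =>
    rw [Multiset.card_cons, Multiset.map_cons, Multiset.sum_cons]
    have := one_le_sizeQ a
    omega

lemma sizeQ_le_msum {q : Q} {m : Multiset Q} (h : q ∈ m) : sizeQ q ≤ (m.map sizeQ).sum :=
  Multiset.single_le_sum (fun x _ => Nat.zero_le x) _ (Multiset.mem_map_of_mem _ h)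

lemma finite_msum_set (s : ℕ) (hfin : ∀ k, k ≤ s → {q : Q | sizeQ q = k}.Finite) :
    {m : Multiset Q | (m.map sizeQ).sum = s}.Finite := by
  classical
  have hT : {q : Q | sizeQ q ≤ s}.Finite := by
    have hEq : {q : Q | sizeQ q ≤ s} = ⋃ k ∈ Set.Iic s, {q : Q | sizeQ q = k} := by
      ext q
      simp only [Set.mem_setOf_eq, Set.mem_iUnion, Set.mem_Iic]
      exact ⟨fun h => ⟨sizeQ q, h, rfl⟩, fun ⟨k, hk, he⟩ => he ▸ hk⟩
    rw [hEq]
    exact (Set.finite_Iic s).biUnion fun k hk => hfin k hk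
  haveI := hT.to_subtype
  apply Set.finite_coe_iff.mp
  refine Finite.of_injective
    (fun m => fun t : {q : Q | sizeQ q ≤ s} =>
      (⟨Multiset.count t.1 m.1, by
        have h1 := Multiset.count_le_card t.1 m.1
        have h2 := card_le_msum m.1
        have h3 := m.2
        simp only [Set.mem_setOf_eq] at h3
        omega⟩ : Fin (s+1))) ?_
  intro m m' hmm
  apply Subtype.ext
  ext a
  by_cases ha : sizeQ a ≤ s
  · have := congrFun hmm ⟨a, ha⟩
    exact congrArg Fin.val this
  · have h1 : a ∉ m.1 := fun hmem => ha (by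
      have := sizeQ_le_msum hmem
      have h3 := m.2
      simp only [Set.mem_setOf_eq] at h3
      omega)
    have h2 : a ∉ m'.1 := fun hmem => ha (by
      have := sizeQ_le_msum hmem
      have h3 := m'.2
      simp only [Set.mem_setOf_eq] at h3
      omega)
    rw [Multiset.count_eq_zero_of_notMem h1, Multiset.count_eq_zero_of_notMem h2]

lemma finite_class : ∀ k, {q : Q | sizeQ q = k}.Finite := by
  intro k
  induction k using Nat.strong_induction_on with | _ k ih =>
  rcases Nat.eq_zero_or_pos k with rfl | hk
  · have : {q : Q | sizeQ q = 0} = ∅ := by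
      ext q
      simp only [Set.mem_setOf_eq, Set.mem_empty_iff_false, iff_false]
      have := one_le_sizeQ q
      omega
    rw [this]
    exact Set.finite_empty
  · have hms : {m : Multiset Q | (m.map sizeQ).sum = k - 1}.Finite :=
      finite_msum_set _ fun j hj => ih j (by omega)
    refine Set.Finite.of_finite_image (hms.subset ?_) chl_injective.injOn
    rintro _ ⟨q, hq, rfl⟩
    simp only [Set.mem_setOf_eq] at hq ⊢
    have := sizeQ_chl q
    omega

lemma finite_cnt (L : RTree) (n : ℕ) : Finite {q : Q // sizeQ q = n ∧ ¬ limbQ L q} :=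
  Set.finite_coe_iff.mpr ((finite_class n).subset fun q hq => hq.1)

end LimbAux

namespace LimbAux

open Multiset

noncomputable instance : DecidableEq Q := Classical.decEq Q

noncomputable def cnt (L : RTree) (n : ℕ) : ℕ :=
  Nat.card {q : Q // sizeQ q = n ∧ ¬ limbQ L q}

def msS (L : RTree) (s : ℕ) : Set (Multiset Q) :=
  {m | (m.map sizeQ).sum = s ∧ ∀ x ∈ m, ¬ limbQ L x}

lemma msS_finite (L : RTree) (s : ℕ) : (msS L s).Finite :=
  (finite_msum_set s fun k _ => finite_class k).subset fun m hm => hm.1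

lemma limbQ_size {L : RTree} {q : Q} (h : limbQ L q) : L.size ≤ sizeQ q := by
  induction q using Quotient.ind with | _ t =>
  exact hasLimb_size h

lemma chl_mkL_avoid (L : RTree) : ∀ x ∈ chl (mkQ L), ¬ limbQ L x := by
  intro x hx hlimb
  have h1 : sizeQ x ≤ ((chl (mkQ L)).map sizeQ).sum := sizeQ_le_msum hx
  have h2 := sizeQ_chl (mkQ L)
  have h3 := limbQ_size hlimb
  simp only [sizeQ_mk] at h2
  omega

lemma msum_chl_mkL (L : RTree) : (((chl (mkQ L))).map sizeQ).sum = L.size - 1 := by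
  have h2 := sizeQ_chl (mkQ L)
  simp only [sizeQ_mk] at h2
  omega

/-- Recursion: the count of avoiders of size `n ≥ 1` in terms of multiset counts. -/
lemma cnt_eq_ncard (L : RTree) (n : ℕ) (hn : 1 ≤ n) :
    cnt L n = (msS L (n-1)).ncard -
      ((msS L (n-1)) ∩ {m | chl (mkQ L) ≤ m}).ncard := by
  classical
  have hbij : Function.Bijective
      (fun q : {q : Q // sizeQ q = n ∧ ¬ limbQ L q} =>
        (⟨chl q.1, by
          have hq := q.2.1
          have hl := q.2.2
          rw [limbQ_iff] at hl
          push_neg at hl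
          have hs := sizeQ_chl q.1
          exact ⟨⟨by omega, fun x hx => hl.2 x hx⟩, hl.1⟩
          ⟩ : ↥((msS L (n-1)) \ {m | chl (mkQ L) ≤ m}))) := by
    constructor
    · intro a b hab
      exact Subtype.ext (chl_injective (congrArg Subtype.val hab))
    · rintro ⟨m, ⟨⟨hsum, havoid⟩, hnc⟩⟩
      obtain ⟨q, rfl⟩ := chl_surjective m
      refine ⟨⟨q, ?_, ?_⟩, rfl⟩
      · have := sizeQ_chl q; omega
      · rw [limbQ_iff]
        push_neg
        exact ⟨hnc, havoid⟩
  have h1 : cnt L n = Nat.card ↥((msS L (n-1)) \ {m | chl (mkQ L) ≤ m}) :=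
    Nat.card_eq_of_bijective _ hbij
  rw [h1, Nat.card_coe_set_eq]
  have hsub : (msS L (n-1)) ∩ {m | chl (mkQ L) ≤ m} ⊆ msS L (n-1) := Set.inter_subset_left
  have hdiff : (msS L (n-1)) \ {m | chl (mkQ L) ≤ m}
      = (msS L (n-1)) \ ((msS L (n-1)) ∩ {m | chl (mkQ L) ≤ m}) := by
    ext m; constructor
    · rintro ⟨h1, h2⟩; exact ⟨h1, fun hc => h2 hc.2⟩
    · rintro ⟨h1, h2⟩; exact ⟨h1, fun hc => h2 ⟨h1, hc⟩⟩
  rw [hdiff, Set.ncard_diff hsub ((msS_finite L (n-1)).subset hsub)]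

lemma msum_sub {m c : Multiset Q} (h : c ≤ m) :
    ((m - c).map sizeQ).sum + (c.map sizeQ).sum = (m.map sizeQ).sum := by
  conv_rhs => rw [← tsub_add_cancel_of_le h]
  rw [Multiset.map_add, Multiset.sum_add]

/-- Counting multisets containing a fixed avoiding multiset `c`. -/
lemma ncard_contains (L : RTree) (s : ℕ) (c : Multiset Q)
    (hc : ∀ x ∈ c, ¬ limbQ L x) (hcs : (c.map sizeQ).sum ≤ s) :
    ((msS L s) ∩ {m | c ≤ m}).ncard = (msS L (s - (c.map sizeQ).sum)).ncard := by
  rw [← Nat.card_coe_set_eq, ← Nat.card_coe_set_eq]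
  refine Nat.card_congr ⟨fun m => ⟨m.1 - c, ?_⟩, fun m => ⟨m.1 + c, ?_⟩, ?_, ?_⟩
  · have hcm := m.2.2
    have hsum := m.2.1.1
    have havoid := m.2.1.2
    have h := msum_sub (m := m.1) (c := c) hcm
    exact ⟨by omega, fun x hx => havoid x (Multiset.mem_of_le tsub_le_self hx)⟩
  · refine ⟨⟨?_, ?_⟩, Multiset.le_add_left _ _⟩
    · rw [Multiset.map_add, Multiset.sum_add]
      have hsum := m.2.1
      omega
    · intro x hx
      rcases Multiset.mem_add.mp hx with h | h
      · exact m.2.2 x h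
      · exact hc x h
  · rintro ⟨m, ⟨⟨hsum, havoid⟩, hcm⟩⟩
    exact Subtype.ext (tsub_add_cancel_of_le hcm)
  · rintro ⟨m, hsum, havoid⟩
    exact Subtype.ext (add_tsub_cancel_right m c)

lemma ncard_contains_empty (L : RTree) (s : ℕ) (c : Multiset Q)
    (hcs : s < (c.map sizeQ).sum) :
    ((msS L s) ∩ {m | c ≤ m}).ncard = 0 := by
  rw [Set.ncard_eq_zero ((msS_finite L s).subset Set.inter_subset_left)]
  ext m
  simp only [Set.mem_inter_iff, Set.mem_setOf_eq, Set.mem_empty_iff_false, iff_false]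
  rintro ⟨⟨hsum, _⟩, hcm⟩
  have h1 := msum_sub hcm
  omega

end LimbAux

namespace LimbAux

open Multiset

def Dsub (L : RTree) (n : ℕ) := {q : Q // sizeQ q < n ∧ ¬ limbQ L q}
def Cl (L : RTree) (k : ℕ) := {q : Q // sizeQ q = k ∧ ¬ limbQ L q}

def sigmaEquiv (L : RTree) (n : ℕ) : Dsub L n ≃ Σ k : Fin n, Cl L k where
  toFun x := ⟨⟨sizeQ x.1, x.2.1⟩, ⟨x.1, rfl, x.2.2⟩⟩
  invFun y := ⟨y.2.1, ⟨by rw [y.2.2.1]; exact y.1.2, y.2.2.2⟩⟩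
  left_inv x := rfl
  right_inv y := by
    rcases y with ⟨⟨k, hk⟩, ⟨q, hq, hl⟩⟩
    dsimp only at hq
    subst hq
    rfl

lemma ncard_msS_eq (L₁ L₂ : RTree) (n s : ℕ) (hs : s < n)
    (hcnt : ∀ k, k < n → cnt L₁ k = cnt L₂ k) :
    (msS L₁ s).ncard = (msS L₂ s).ncard := by
  classical
  have hEq : ∀ k : Fin n, Nonempty (Cl L₁ k ≃ Cl L₂ k) := by
    intro k
    haveI : Finite (Cl L₁ k) := finite_cnt L₁ k
    haveI : Finite (Cl L₂ k) := finite_cnt L₂ k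
    exact Finite.card_eq.mp (hcnt k k.2)
  let E : Dsub L₁ n ≃ Dsub L₂ n :=
    (sigmaEquiv L₁ n).trans
      ((Equiv.sigmaCongrRight fun k => (hEq k).some).trans (sigmaEquiv L₂ n).symm)
  have hEsize : ∀ x : Dsub L₁ n, sizeQ (E x).1 = sizeQ x.1 := by
    intro x
    show sizeQ ((hEq ⟨sizeQ x.1, x.2.1⟩).some ⟨x.1, rfl, x.2.2⟩).1 = sizeQ x.1
    exact ((hEq ⟨sizeQ x.1, x.2.1⟩).some ⟨x.1, rfl, x.2.2⟩).2.1
  have hEsize' : ∀ y : Dsub L₂ n, sizeQ (E.symm y).1 = sizeQ y.1 := by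
    intro y
    have h := hEsize (E.symm y)
    rw [Equiv.apply_symm_apply] at h
    exact h.symm
  let f : Q → Q := fun q => if h : sizeQ q < n ∧ ¬ limbQ L₁ q then (E ⟨q, h⟩).1 else q
  let g : Q → Q := fun q => if h : sizeQ q < n ∧ ¬ limbQ L₂ q then (E.symm ⟨q, h⟩).1 else q
  have hf : ∀ q (h : sizeQ q < n ∧ ¬ limbQ L₁ q), f q = (E ⟨q, h⟩).1 :=
    fun q h => dif_pos h
  have hg : ∀ q (h : sizeQ q < n ∧ ¬ limbQ L₂ q), g q = (E.symm ⟨q, h⟩).1 :=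
    fun q h => dif_pos h
  have hgf : ∀ q (h : sizeQ q < n ∧ ¬ limbQ L₁ q), g (f q) = q := by
    intro q h
    rw [hf q h, hg _ (E ⟨q, h⟩).2]
    rw [show (⟨(E ⟨q, h⟩).1, (E ⟨q, h⟩).2⟩ : Dsub L₂ n) = E ⟨q, h⟩ from rfl]
    exact congrArg Subtype.val (E.symm_apply_apply _)
  have hfg : ∀ q (h : sizeQ q < n ∧ ¬ limbQ L₂ q), f (g q) = q := by
    intro q h
    rw [hg q h, hf _ (E.symm ⟨q, h⟩).2]
    rw [show (⟨(E.symm ⟨q, h⟩).1, (E.symm ⟨q, h⟩).2⟩ : Dsub L₁ n) = E.symm ⟨q, h⟩ from rfl]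
    exact congrArg Subtype.val (E.apply_symm_apply _)
  have hdom1 : ∀ m : Multiset Q, m ∈ msS L₁ s → ∀ q ∈ m, sizeQ q < n ∧ ¬ limbQ L₁ q := by
    intro m hm q hq
    exact ⟨by have := sizeQ_le_msum hq; have := hm.1; omega, hm.2 q hq⟩
  have hdom2 : ∀ m : Multiset Q, m ∈ msS L₂ s → ∀ q ∈ m, sizeQ q < n ∧ ¬ limbQ L₂ q := by
    intro m hm q hq
    exact ⟨by have := sizeQ_le_msum hq; have := hm.1; omega, hm.2 q hq⟩
  rw [← Nat.card_coe_set_eq, ← Nat.card_coe_set_eq]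
  refine Nat.card_congr ⟨fun m => ⟨m.1.map f, ?_, ?_⟩, fun m => ⟨m.1.map g, ?_, ?_⟩, ?_, ?_⟩
  · rw [Multiset.map_map]
    have he : m.1.map (sizeQ ∘ f) = m.1.map sizeQ :=
      Multiset.map_congr rfl fun q hq => by
        have h := hdom1 m.1 m.2 q hq
        show sizeQ (f q) = sizeQ q
        rw [hf q h]
        exact hEsize ⟨q, h⟩
    rw [he]
    exact m.2.1
  · intro x hx
    obtain ⟨q, hq, rfl⟩ := Multiset.mem_map.mp hx
    have h := hdom1 m.1 m.2 q hq
    rw [hf q h]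
    exact (E ⟨q, h⟩).2.2
  · rw [Multiset.map_map]
    have he : m.1.map (sizeQ ∘ g) = m.1.map sizeQ :=
      Multiset.map_congr rfl fun q hq => by
        have h := hdom2 m.1 m.2 q hq
        show sizeQ (g q) = sizeQ q
        rw [hg q h]
        exact hEsize' ⟨q, h⟩
    rw [he]
    exact m.2.1
  · intro x hx
    obtain ⟨q, hq, rfl⟩ := Multiset.mem_map.mp hx
    have h := hdom2 m.1 m.2 q hq
    rw [hg q h]
    exact (E.symm ⟨q, h⟩).2.2
  · intro m
    apply Subtype.ext
    show (m.1.map f).map g = m.1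
    rw [Multiset.map_map]
    have he : m.1.map (g ∘ f) = m.1.map id :=
      Multiset.map_congr rfl fun q hq => hgf q (hdom1 m.1 m.2 q hq)
    rw [he, Multiset.map_id]
  · intro m
    apply Subtype.ext
    show (m.1.map g).map f = m.1
    rw [Multiset.map_map]
    have he : m.1.map (f ∘ g) = m.1.map id :=
      Multiset.map_congr rfl fun q hq => hfg q (hdom2 m.1 m.2 q hq)
    rw [he, Multiset.map_id]

end LimbAux

namespace LimbAux

open Multiset

lemma cnt_zero (L : RTree) : cnt L 0 = 0 := by
  haveI : IsEmpty {q : Q // sizeQ q = 0 ∧ ¬ limbQ L q} :=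
    ⟨fun q => by have := one_le_sizeQ q.1; have := q.2.1; omega⟩
  exact Nat.card_of_isEmpty

lemma cnt_main (ℓ : ℕ) (L₁ L₂ : RTree) (h1 : L₁.size = ℓ) (h2 : L₂.size = ℓ) :
    ∀ n, cnt L₁ n = cnt L₂ n := by
  intro n
  induction n using Nat.strong_induction_on with | _ n ih =>
  rcases Nat.eq_zero_or_pos n with rfl | hn
  · rw [cnt_zero, cnt_zero]
  · have hl1 : 1 ≤ ℓ := h1 ▸ one_le_size L₁
    have key : ∀ s, s < n → (msS L₁ s).ncard = (msS L₂ s).ncard :=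
      fun s hs => ncard_msS_eq L₁ L₂ n s hs ih
    rw [cnt_eq_ncard L₁ n hn, cnt_eq_ncard L₂ n hn]
    have hm1 := msum_chl_mkL L₁
    have hm2 := msum_chl_mkL L₂
    rw [h1] at hm1
    rw [h2] at hm2
    rcases le_or_gt ℓ n with hle | hlt
    · rw [ncard_contains L₁ (n-1) _ (chl_mkL_avoid L₁) (by omega),
        ncard_contains L₂ (n-1) _ (chl_mkL_avoid L₂) (by omega),
        hm1, hm2, key (n-1) (by omega), key ((n-1) - (ℓ-1)) (by omega)]
    · rw [ncard_contains_empty L₁ (n-1) _ (by omega),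
        ncard_contains_empty L₂ (n-1) _ (by omega),
        key (n-1) (by omega)]

lemma card_quot_eq (L : RTree) (n : ℕ) :
    Nat.card (Quot (fun a b : {t : RTree // t.size = n ∧ ¬ HasLimb t L} =>
      RTree.Iso a.1 b.1)) = cnt L n := by
  refine Nat.card_eq_of_bijective
    (Quot.lift (fun a : {t : RTree // t.size = n ∧ ¬ HasLimb t L} =>
      (⟨mkQ a.1, a.2⟩ : {q : Q // sizeQ q = n ∧ ¬ limbQ L q}))
      (fun a b h => Subtype.ext (mkQ_eq.mpr h))) ⟨?_, ?_⟩
  · intro x y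
    induction x using Quot.ind with | _ a =>
    induction y using Quot.ind with | _ b =>
    intro h
    exact Quot.sound (mkQ_eq.mp (congrArg Subtype.val h))
  · rintro ⟨q, hq, hl⟩
    induction q using Quotient.ind with | _ t =>
    exact ⟨Quot.mk _ ⟨t, hq, hl⟩, Subtype.ext rfl⟩

end LimbAux


/-- If `L₁` and `L₂` are two distinct rooted trees with `ℓ` vertices, then for every
`n` the number of `n`-vertex rooted trees (up to isomorphism) without `L₁` as a limb
equals the number of `n`-vertex rooted trees without `L₂` as a limb. -/
theorem stmt18 (ℓ n : ℕ) (L₁ L₂ : RTree) (h1 : L₁.size = ℓ) (h2 : L₂.size = ℓ)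
    (hne : ¬ RTree.Iso L₁ L₂) :
    Nat.card (Quot (fun a b : {t : RTree // t.size = n ∧ ¬ HasLimb t L₁} =>
      RTree.Iso a.1 b.1)) =
    Nat.card (Quot (fun a b : {t : RTree // t.size = n ∧ ¬ HasLimb t L₂} =>
      RTree.Iso a.1 b.1)) := by
  rw [LimbAux.card_quot_eq, LimbAux.card_quot_eq]
  exact LimbAux.cnt_main ℓ L₁ L₂ h1 h2 n
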